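/- Gathering is unsolvable in 1-interval connected unicyclic graphs: for every deterministic algorithm executed by k = 2 identical anonymous agents, and every underlying unicyclic graph whose unique cycle has length c > 3, there exist initial positions of the two agents (in particular, positions in the trees attached to two different cycle vertices) and a 1-interval connected dynamic graph sequence on this underlying graph such that, in the resulting execution, the two agents are never located at the same node. -/

import Mathlib

/-!
Statement 0: Gathering is unsolvable in 1-interval connected unicyclic graphs.

We model a static network as a finite connected simple graph with a port numbering,
a dynamic graph as a sequence of spanning subgraphs of the underlying graph,
and an agent algorithm as a deterministic automaton whose step function sees the
degree of its node, the number of agents there, and whether it was blocked in the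
previous round, and outputs a new state together with an optional port to move through.
-/

open SimpleGraph

open scoped Classical

/-- A port numbering of a graph: at every vertex `v`, a bijection between the
port numbers `0, …, δ(v) - 1` and the neighbors of `v`. -/
structure PortNumbering {V : Type} [Fintype V] [DecidableEq V]
    (G : SimpleGraph V) [DecidableRel G.Adj] where
  toFun : ∀ v : V, Fin (G.degree v) ≃ G.neighborSet v

/-- The node reached from `v` by moving through port `p` (none if `p` is not a valid port). -/
def portTarget {V : Type} [Fintype V] [DecidableEq V]
    (G : SimpleGraph V) [DecidableRel G.Adj] (pn : PortNumbering G)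
    (v : V) (p : ℕ) : Option V :=
  if h : p < G.degree v then some ((pn.toFun v ⟨p, h⟩ : G.neighborSet v) : V) else none

/-- A deterministic algorithm for identical anonymous agents.  The step function receives
the current state, the degree of the current node, the number of agents at the current
node (strong multiplicity detection), and whether the agent was blocked in the previous
round; it outputs the new state and `some p` to attempt to move through port `p`
(`none` to stay put). -/
structure Algorithm : Type 1 where
  State : Type
  init : State
  step : State → ℕ → ℕ → Bool → State × Option ℕ

/-- `Execution G pn Dyn Alg start pos st blk` says that `pos`, `st`, `blk` are the
position, state and blocked-flag traces of `k` identical anonymous agents running the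
deterministic algorithm `Alg` on the dynamic graph `Dyn` over the underlying graph `G`
with port numbering `pn`, started at the nodes `start`.  An agent that chooses a port
whose edge is disabled by the scheduler in the current round is blocked and stays put. -/
structure Execution {V : Type} [Fintype V] [DecidableEq V]
    (G : SimpleGraph V) [DecidableRel G.Adj] (pn : PortNumbering G)
    (Dyn : ℕ → SimpleGraph V) (Alg : Algorithm)
    {k : ℕ} (start : Fin k → V)
    (pos : Fin k → ℕ → V) (st : Fin k → ℕ → Alg.State)
    (blk : Fin k → ℕ → Bool) : Prop where
  init_pos : ∀ a, pos a 0 = start a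
  init_st : ∀ a, st a 0 = Alg.init
  init_blk : ∀ a, blk a 0 = false
  step_st : ∀ a t,
    st a (t + 1) =
      (Alg.step (st a t) (G.degree (pos a t))
        ((Finset.univ.filter fun b => pos b t = pos a t).card) (blk a t)).1
  step_move : ∀ a t,
    (match (Alg.step (st a t) (G.degree (pos a t))
        ((Finset.univ.filter fun b => pos b t = pos a t).card) (blk a t)).2 with
     | none => pos a (t + 1) = pos a t ∧ blk a (t + 1) = false
     | some p =>
        match portTarget G pn (pos a t) p with
        | none => pos a (t + 1) = pos a t ∧ blk a (t + 1) = false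
        | some w =>
          if (Dyn t).Adj (pos a t) w then pos a (t + 1) = w ∧ blk a (t + 1) = false
          else pos a (t + 1) = pos a t ∧ blk a (t + 1) = true)

/-- A unicyclic graph: connected with as many edges as vertices. -/
def Unicyclic {V : Type} [Fintype V] [DecidableEq V]
    (G : SimpleGraph V) [DecidableRel G.Adj] : Prop :=
  G.Connected ∧ G.edgeFinset.card = Fintype.card V

/-! ### Auxiliary graph lemmas -/

/-- Deleting an edge that lies on a cycle of a connected graph keeps it connected. -/
lemma connected_deleteEdges_of_mem_cycle {V : Type} {G : SimpleGraph V} (hG : G.Connected)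
    {u : V} (c : G.Walk u u) (hc : c.IsCycle) {e : Sym2 V} (he : e ∈ c.edges) :
    (G.deleteEdges {e}).Connected := by
  induction e using Sym2.ind with
  | _ x y =>
  have hreach : (G.deleteEdges {s(x, y)}).Reachable x y := by
    have h := (SimpleGraph.adj_and_reachable_delete_edges_iff_exists_cycle (G := G)).2
      ⟨u, c, hc, he⟩
    exact h.2
  have key : ∀ {a b : V}, G.Walk a b → (G.deleteEdges {s(x, y)}).Reachable a b := by
    intro a b p
    induction p with
    | nil => exact SimpleGraph.Reachable.refl _
    | @cons a' c' b' h q ih =>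
      refine SimpleGraph.Reachable.trans ?_ ih
      by_cases hxy : s(a', c') = s(x, y)
      · rw [Sym2.eq_iff] at hxy
        rcases hxy with ⟨rfl, rfl⟩ | ⟨rfl, rfl⟩
        · exact hreach
        · exact hreach.symm
      · exact SimpleGraph.Adj.reachable
          (by rw [SimpleGraph.deleteEdges_adj]; exact ⟨h, by simpa using hxy⟩)
  haveI : Nonempty V := hG.nonempty
  refine ⟨fun a b => ?_⟩
  obtain ⟨p⟩ := hG.preconnected a b
  exact key p

/-- A connected graph on a finite vertex set has at least `card V - 1` edges. -/
lemma card_le_ncard_edgeSet_add_one {V : Type} [Fintype V] :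
    ∀ (n : ℕ) (G : SimpleGraph V), G.Connected → G.edgeSet.ncard = n →
      Fintype.card V ≤ n + 1 := by
  intro n
  induction n using Nat.strong_induction_on with
  | _ n ih =>
    intro G hG hn
    classical
    by_cases hac : G.IsAcyclic
    · have ht : G.IsTree := ⟨hG, hac⟩
      have hcard := ht.card_edgeFinset
      have hn' : G.edgeSet.ncard = G.edgeFinset.card := Set.ncard_eq_toFinset_card' _
      have hpos : 0 < Fintype.card V := Fintype.card_pos_iff.2 hG.nonempty
      omega
    · simp only [SimpleGraph.isAcyclic_iff_forall_adj_isBridge] at hac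
      have hac' : ∃ (v : V) (c : G.Walk v v), c.IsCycle := by
        by_contra hno
        push_neg at hno
        exact hac (by
          intro x y hxy
          rw [SimpleGraph.isBridge_iff_adj_and_forall_cycle_notMem hxy]
          exact fun u p hp _ => hno u p hp)
      obtain ⟨v, c, hc⟩ := hac'
      have hlen : 0 < c.edges.length := by
        rw [SimpleGraph.Walk.length_edges]
        have := hc.three_le_length
        omega
      set e := c.edges.get ⟨0, hlen⟩ with he_def
      have he : e ∈ c.edges := List.get_mem _ _
      have heG : e ∈ G.edgeSet := c.edges_subset_edgeSet he
      have hconn' := connected_deleteEdges_of_mem_cycle hG c hc he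
      have hdel : (G.deleteEdges {e}).edgeSet.ncard = n - 1 := by
        rw [SimpleGraph.edgeSet_deleteEdges]
        rw [show (G.edgeSet \ {e}) = G.edgeSet \ {e} from rfl]
        rw [Set.ncard_diff_singleton_of_mem heG, hn]
      have hn1 : 1 ≤ n := by
        have : 0 < G.edgeSet.ncard := by
          rw [Set.ncard_pos (Set.toFinite _)]
          exact ⟨e, heG⟩
        omega
      have := ih (n - 1) (by omega) (G.deleteEdges {e}) hconn' hdel
      omega

/-! ### The adversary simulation -/

section Adversary

variable {V : Type} [Fintype V] [DecidableEq V]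
  (G : SimpleGraph V) [DecidableRel G.Adj] (pn : PortNumbering G)
  (Alg : Algorithm) (φ : V → Bool)

end Adversary

/-- A configuration of the two agents: positions, states, blocked flags. -/
abbrev GCfg (V : Type) (Alg : Algorithm) : Type :=
  (Fin 2 → V) × (Fin 2 → Alg.State) × (Fin 2 → Bool)

section Adversary2

variable {V : Type} [Fintype V] [DecidableEq V]
  (G : SimpleGraph V) [DecidableRel G.Adj] (pn : PortNumbering G)
  (Alg : Algorithm) (φ : V → Bool)

/-- The multiplicity seen by agent `a`. -/
def gcnt (p : Fin 2 → V) (a : Fin 2) : ℕ :=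
  (Finset.univ.filter fun b => p b = p a).card

/-- The output of the algorithm for agent `a` in configuration `c`. -/
def gout (c : GCfg V Alg) (a : Fin 2) : Alg.State × Option ℕ :=
  Alg.step (c.2.1 a) (G.degree (c.1 a)) (gcnt c.1 a) (c.2.2 a)

/-- The node agent `a` intends to move to (if any). -/
def gint (c : GCfg V Alg) (a : Fin 2) : Option V :=
  (gout G Alg c a).2.bind fun p => portTarget G pn (c.1 a) p

/-- The target of agent `a`: intended node, or current node if staying. -/
def gtgt (c : GCfg V Alg) (a : Fin 2) : V :=
  (gint G pn Alg c a).getD (c.1 a)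

/-- The adversary's choice of dynamic graph in configuration `c`. -/
def gdyn (c : GCfg V Alg) : SimpleGraph V :=
  if φ (gtgt G pn Alg c 0) = φ (gtgt G pn Alg c 1) ∧ φ (c.1 0) ≠ φ (gtgt G pn Alg c 0) then
    G.deleteEdges {s(c.1 0, gtgt G pn Alg c 0)}
  else if φ (gtgt G pn Alg c 0) = φ (gtgt G pn Alg c 1) ∧ φ (c.1 1) ≠ φ (gtgt G pn Alg c 1) then
    G.deleteEdges {s(c.1 1, gtgt G pn Alg c 1)}
  else G

/-- One step of the simulated execution. -/
noncomputable def gstep (c : GCfg V Alg) : GCfg V Alg :=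
  ( fun a =>
      if (gdyn G pn Alg φ c).Adj (c.1 a) (gtgt G pn Alg c a) then gtgt G pn Alg c a
      else c.1 a,
    fun a => (gout G Alg c a).1,
    fun a =>
      if (gdyn G pn Alg φ c).Adj (c.1 a) (gtgt G pn Alg c a) then false
      else (gint G pn Alg c a).isSome )

/-- The simulated execution. -/
noncomputable def gsim (start : Fin 2 → V) : ℕ → GCfg V Alg
  | 0 => (start, fun _ => Alg.init, fun _ => false)
  | t + 1 => gstep G pn Alg φ (gsim start t)

lemma gint_adj {c : GCfg V Alg} {a : Fin 2} {w : V}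
    (h : gint G pn Alg c a = some w) : G.Adj (c.1 a) w := by
  unfold gint at h
  rcases ho : (gout G Alg c a).2 with _ | p
  · rw [ho] at h; simp at h
  · rw [ho] at h
    simp only [Option.bind_some] at h
    unfold portTarget at h
    split at h
    · next hp =>
      simp only [Option.some.injEq] at h
      subst h
      exact (pn.toFun (c.1 a) ⟨p, hp⟩).2
    · simp at h

lemma gint_of_cross {c : GCfg V Alg} {a : Fin 2}
    (h : φ (c.1 a) ≠ φ (gtgt G pn Alg c a)) :
    gint G pn Alg c a = some (gtgt G pn Alg c a) := by
  rcases hi : gint G pn Alg c a with _ | w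
  · exfalso; apply h; unfold gtgt; rw [hi]; rfl
  · unfold gtgt; rw [hi]; rfl

lemma gtgt_adj_of_cross {c : GCfg V Alg} {a : Fin 2}
    (h : φ (c.1 a) ≠ φ (gtgt G pn Alg c a)) :
    G.Adj (c.1 a) (gtgt G pn Alg c a) :=
  gint_adj G pn Alg (gint_of_cross G pn Alg φ h)

/-- The adversary's graph is always a subgraph of `G`. -/
lemma gdyn_le (c : GCfg V Alg) : gdyn G pn Alg φ c ≤ G := by
  unfold gdyn
  split_ifs <;> first | exact SimpleGraph.deleteEdges_le _ | exact le_refl G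

/-- The adversary's graph is always connected. -/
lemma gdyn_connected (hG : G.Connected)
    (hcross : ∀ u w : V, G.Adj u w → φ u ≠ φ w → (G.deleteEdges {s(u, w)}).Connected)
    (c : GCfg V Alg) : (gdyn G pn Alg φ c).Connected := by
  unfold gdyn
  split_ifs with h1 h2
  · exact hcross _ _ (gtgt_adj_of_cross G pn Alg φ h1.2) h1.2
  · exact hcross _ _ (gtgt_adj_of_cross G pn Alg φ h2.2) h2.2
  · exact hG

/-- Key invariant step: if the two agents have different colors, they still do
after one simulated step. -/
lemma gstep_inv {c : GCfg V Alg} (hφ : φ (c.1 0) ≠ φ (c.1 1)) :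
    φ ((gstep G pn Alg φ c).1 0) ≠ φ ((gstep G pn Alg φ c).1 1) := by
  have hfst : ∀ a, (gstep G pn Alg φ c).1 a =
      if (gdyn G pn Alg φ c).Adj (c.1 a) (gtgt G pn Alg c a) then gtgt G pn Alg c a
      else c.1 a := fun a => rfl
  by_cases hx : φ (gtgt G pn Alg c 0) = φ (gtgt G pn Alg c 1)
  · by_cases h0 : φ (c.1 0) = φ (gtgt G pn Alg c 0)
    · -- agent 1 is the (only possible) crossing agent; block it
      have h1 : φ (c.1 1) ≠ φ (gtgt G pn Alg c 1) := by
        intro h; exact hφ (by rw [h0, hx, h])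
      have hD : gdyn G pn Alg φ c = G.deleteEdges {s(c.1 1, gtgt G pn Alg c 1)} := by
        unfold gdyn
        rw [if_neg (by push_neg; intro _; simpa using h0), if_pos ⟨hx, h1⟩]
      have hnA : ¬ (gdyn G pn Alg φ c).Adj (c.1 1) (gtgt G pn Alg c 1) := by
        rw [hD]; simp
      have hpos1 : (gstep G pn Alg φ c).1 1 = c.1 1 := by
        rw [hfst 1, if_neg hnA]
      have hpos0 : φ ((gstep G pn Alg φ c).1 0) = φ (c.1 0) := by
        rw [hfst 0]
        by_cases hA : (gdyn G pn Alg φ c).Adj (c.1 0) (gtgt G pn Alg c 0)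
        · rw [if_pos hA, ← h0]
        · rw [if_neg hA]
      rw [hpos1, hpos0]
      exact hφ
    · -- agent 0 crosses; block agent 0
      have hD : gdyn G pn Alg φ c = G.deleteEdges {s(c.1 0, gtgt G pn Alg c 0)} := by
        unfold gdyn
        rw [if_pos ⟨hx, h0⟩]
      have hnA : ¬ (gdyn G pn Alg φ c).Adj (c.1 0) (gtgt G pn Alg c 0) := by
        rw [hD]; simp
      have hpos0 : (gstep G pn Alg φ c).1 0 = c.1 0 := by
        rw [hfst 0, if_neg hnA]
      have hpos1 : φ ((gstep G pn Alg φ c).1 1) = φ (gtgt G pn Alg c 1) := by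
        rw [hfst 1]
        by_cases hA : (gdyn G pn Alg φ c).Adj (c.1 1) (gtgt G pn Alg c 1)
        · rw [if_pos hA]
        · rw [if_neg hA]
          -- agent 1 is not blocked, so either it stays by choice or is not moving at all
          rcases hi : gint G pn Alg c 1 with _ | w
          · unfold gtgt; rw [hi]; rfl
          · exfalso
            have hw : gtgt G pn Alg c 1 = w := by unfold gtgt; rw [hi]; rfl
            have hadj : G.Adj (c.1 1) (gtgt G pn Alg c 1) := by
              rw [hw]; exact gint_adj G pn Alg hi
            apply hA
            rw [hD, SimpleGraph.deleteEdges_adj]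
            refine ⟨hadj, ?_⟩
            simp only [Set.mem_singleton_iff]
            intro hcontra
            rw [Sym2.eq_iff] at hcontra
            rcases hcontra with ⟨hc1, _⟩ | ⟨hc1, hc2⟩
            · exact hφ (congrArg φ hc1).symm
            · apply hφ
              rw [← hc2, ← hx, hc1]
      rw [hpos0, hpos1, ← hx]
      exact h0
  · -- no danger this round; the full graph is used
    have hD : gdyn G pn Alg φ c = G := by
      unfold gdyn
      rw [if_neg (fun h => hx h.1), if_neg (fun h => hx h.1)]
    have hpos : ∀ a, φ ((gstep G pn Alg φ c).1 a) = φ (gtgt G pn Alg c a) := by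
      intro a
      rw [hfst a]
      by_cases hA : (gdyn G pn Alg φ c).Adj (c.1 a) (gtgt G pn Alg c a)
      · rw [if_pos hA]
      · rw [if_neg hA]
        rcases hi : gint G pn Alg c a with _ | w
        · unfold gtgt; rw [hi]; rfl
        · exfalso
          apply hA
          have hw : gtgt G pn Alg c a = w := by unfold gtgt; rw [hi]; rfl
          rw [hD, hw]
          exact gint_adj G pn Alg hi
    rw [hpos 0, hpos 1]
    exact hx

end Adversary2

section Determinism

variable {V : Type} [Fintype V] [DecidableEq V]
  (G : SimpleGraph V) [DecidableRel G.Adj] (pn : PortNumbering G)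
  (Alg : Algorithm) (φ : V → Bool)

lemma gtgt_eq_of_gint_none {c : GCfg V Alg} {a : Fin 2}
    (hi : gint G pn Alg c a = none) : gtgt G pn Alg c a = c.1 a := by
  unfold gtgt; rw [hi]; rfl

lemma gtgt_eq_of_gint_some {c : GCfg V Alg} {a : Fin 2} {w : V}
    (hi : gint G pn Alg c a = some w) : gtgt G pn Alg c a = w := by
  unfold gtgt; rw [hi]; rfl

lemma gstep_fst (c : GCfg V Alg) (a : Fin 2) :
    (gstep G pn Alg φ c).1 a =
      if (gdyn G pn Alg φ c).Adj (c.1 a) (gtgt G pn Alg c a) then gtgt G pn Alg c a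
      else c.1 a := rfl

lemma gstep_st (c : GCfg V Alg) (a : Fin 2) :
    (gstep G pn Alg φ c).2.1 a = (gout G Alg c a).1 := rfl

lemma gstep_blk (c : GCfg V Alg) (a : Fin 2) :
    (gstep G pn Alg φ c).2.2 a =
      if (gdyn G pn Alg φ c).Adj (c.1 a) (gtgt G pn Alg c a) then false
      else (gint G pn Alg c a).isSome := rfl

lemma gstep_of_gint_none {c : GCfg V Alg} {a : Fin 2}
    (hi : gint G pn Alg c a = none) :
    (gstep G pn Alg φ c).1 a = c.1 a ∧ (gstep G pn Alg φ c).2.2 a = false := by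
  have ht := gtgt_eq_of_gint_none G pn Alg hi
  have hnA : ¬ (gdyn G pn Alg φ c).Adj (c.1 a) (gtgt G pn Alg c a) := by
    rw [ht]; exact (gdyn G pn Alg φ c).irrefl
  constructor
  · rw [gstep_fst, if_neg hnA]
  · rw [gstep_blk, if_neg hnA, hi]; rfl

/-- Determinism: any execution against the adversary's dynamic graph coincides
with the simulated execution. -/
lemma exec_eq_gsim (start : Fin 2 → V)
    (pos : Fin 2 → ℕ → V) (st : Fin 2 → ℕ → Alg.State) (blk : Fin 2 → ℕ → Bool)
    (hE : Execution G pn (fun t => gdyn G pn Alg φ (gsim G pn Alg φ start t)) Alg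
      start pos st blk) :
    ∀ t a, pos a t = (gsim G pn Alg φ start t).1 a ∧
      st a t = (gsim G pn Alg φ start t).2.1 a ∧
      blk a t = (gsim G pn Alg φ start t).2.2 a := by
  intro t
  induction t with
  | zero => exact fun a => ⟨hE.init_pos a, hE.init_st a, hE.init_blk a⟩
  | succ t ih =>
    set c := gsim G pn Alg φ start t with hc
    have hp : ∀ a, pos a t = c.1 a := fun a => (ih a).1
    have hs : ∀ a, st a t = c.2.1 a := fun a => (ih a).2.1
    have hb : ∀ a, blk a t = c.2.2 a := fun a => (ih a).2.2
    have hout : ∀ a, Alg.step (st a t) (G.degree (pos a t))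
        ((Finset.univ.filter fun b => pos b t = pos a t).card) (blk a t)
        = gout G Alg c a := by
      intro a
      unfold gout gcnt
      simp only [hp, hs, hb]
      rw [hp a]
    have hsim1 : gsim G pn Alg φ start (t + 1) = gstep G pn Alg φ c := by
      rw [hc]
      simp only [gsim]
    intro a
    have hst : st a (t + 1) = (gstep G pn Alg φ c).2.1 a := by
      rw [hE.step_st a t, hout a, gstep_st]
    have hm := hE.step_move a t
    rw [hout a] at hm
    simp only [hp a] at hm
    rw [← hc] at hm
    have hkey : pos a (t + 1) = (gstep G pn Alg φ c).1 a ∧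
        blk a (t + 1) = (gstep G pn Alg φ c).2.2 a := by
      split at hm
      · rename_i ho
        have hi : gint G pn Alg c a = none := by unfold gint; rw [ho]; rfl
        have hg := gstep_of_gint_none G pn Alg φ hi
        exact ⟨hm.1.trans hg.1.symm, hm.2.trans hg.2.symm⟩
      · rename_i p ho
        split at hm
        · rename_i hpt
          have hi : gint G pn Alg c a = none := by
            unfold gint; rw [ho, Option.bind_some, hpt]
          have hg := gstep_of_gint_none G pn Alg φ hi
          exact ⟨hm.1.trans hg.1.symm, hm.2.trans hg.2.symm⟩
        · rename_i w hpt
          have hi : gint G pn Alg c a = some w := by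
            unfold gint; rw [ho, Option.bind_some, hpt]
          have ht := gtgt_eq_of_gint_some G pn Alg hi
          split at hm
          · rename_i hA
            have hA' : (gdyn G pn Alg φ c).Adj (c.1 a) (gtgt G pn Alg c a) := by
              rw [ht]; exact hA
            refine ⟨?_, ?_⟩
            · rw [hm.1, gstep_fst, if_pos hA', ht]
            · rw [hm.2, gstep_blk, if_pos hA']
          · rename_i hA
            have hA' : ¬ (gdyn G pn Alg φ c).Adj (c.1 a) (gtgt G pn Alg c a) := by
              rw [ht]; exact hA
            refine ⟨?_, ?_⟩
            · rw [hm.1, gstep_fst, if_neg hA']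
            · rw [hm.2, gstep_blk, if_neg hA', hi]
              rfl
    rw [hsim1]
    exact ⟨hkey.1, hst, hkey.2⟩

end Determinism

/-- Gathering is unsolvable in 1-interval connected unicyclic graphs:
for every deterministic algorithm run by `k = 2` identical anonymous agents, and every
underlying unicyclic graph whose unique cycle has length `> 3`, there exist distinct
initial positions of the two agents and a 1-interval connected dynamic graph sequence
on this underlying graph such that, in the resulting execution, the two agents are
never located at the same node. -/
theorem gathering_unsolvable_in_unicyclic
    {V : Type} [Fintype V] [DecidableEq V]
    (G : SimpleGraph V) [DecidableRel G.Adj] (pn : PortNumbering G)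
    (hU : Unicyclic G)
    {v : V} (cyc : G.Walk v v) (hcyc : cyc.IsCycle) (hlen : 3 < cyc.length)
    (Alg : Algorithm) :
    ∃ start : Fin 2 → V, Function.Injective start ∧
      ∃ Dyn : ℕ → SimpleGraph V,
        (∀ t, Dyn t ≤ G) ∧ (∀ t, (Dyn t).Connected) ∧
        ∀ (pos : Fin 2 → ℕ → V) (st : Fin 2 → ℕ → Alg.State) (blk : Fin 2 → ℕ → Bool),
          Execution G pn Dyn Alg start pos st blk →
          ∀ t : ℕ, pos 0 t ≠ pos 1 t := by
  classical
  obtain ⟨hGc, hcard⟩ := hU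
  have hlen2 : 1 < cyc.edges.length := by
    rw [SimpleGraph.Walk.length_edges]; omega
  set e1 := cyc.edges.get ⟨0, by omega⟩ with he1def
  set e2 := cyc.edges.get ⟨1, hlen2⟩ with he2def
  have he1 : e1 ∈ cyc.edges := List.get_mem _ _
  have he2 : e2 ∈ cyc.edges := List.get_mem _ _
  have he1G : e1 ∈ G.edgeSet := cyc.edges_subset_edgeSet he1
  have he2G : e2 ∈ G.edgeSet := cyc.edges_subset_edgeSet he2
  have hnd : cyc.edges.Nodup := hcyc.edges_nodup
  have hne12 : e1 ≠ e2 := by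
    rw [he1def, he2def]
    intro h
    have := List.Nodup.get_inj_iff hnd |>.1 h
    simp at this
  set G2 := G.deleteEdges {e1, e2} with hG2
  have hEn : G.edgeSet.ncard = Fintype.card V := by
    rw [Set.ncard_eq_toFinset_card']
    exact hcard
  have hG2card : G2.edgeSet.ncard = Fintype.card V - 2 := by
    rw [hG2, SimpleGraph.edgeSet_deleteEdges]
    have hsplit : G.edgeSet \ {e1, e2} = (G.edgeSet \ {e1}) \ {e2} := by
      ext x
      simp only [Set.mem_diff, Set.mem_insert_iff, Set.mem_singleton_iff]
      tauto
    have he2' : e2 ∈ G.edgeSet \ {e1} := ⟨he2G, by simpa using hne12.symm⟩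
    rw [hsplit, Set.ncard_diff_singleton_of_mem he2',
      Set.ncard_diff_singleton_of_mem he1G, hEn]
    omega
  have hn2 : 2 ≤ Fintype.card V := by
    have hsub : ({e1, e2} : Set (Sym2 V)) ⊆ G.edgeSet := by
      intro x hx
      rcases hx with rfl | hx
      · exact he1G
      · rw [Set.mem_singleton_iff] at hx; subst hx; exact he2G
    have h2 : ({e1, e2} : Set (Sym2 V)).ncard = 2 := Set.ncard_pair hne12
    have := Set.ncard_le_ncard hsub (Set.toFinite _)
    omega
  have hG2nc : ¬ G2.Connected := by
    intro hc
    have := card_le_ncard_edgeSet_add_one _ G2 hc hG2card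
    omega
  have hexists : ∃ u0 w0 : V, ¬ G2.Reachable u0 w0 := by
    by_contra h
    push_neg at h
    haveI : Nonempty V := hGc.nonempty
    exact hG2nc ⟨fun a b => h a b⟩
  obtain ⟨u0, w0, hnr⟩ := hexists
  set φ : V → Bool := fun x => if G2.Reachable u0 x then true else false with hφdef
  have hφu0 : φ u0 = true := by
    simp only [hφdef, if_pos (SimpleGraph.Reachable.refl u0)]
  have hφw0 : φ w0 = false := by simp [hφdef, hnr]
  have hcross : ∀ u w : V, G.Adj u w → φ u ≠ φ w →
      (G.deleteEdges {s(u, w)}).Connected := by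
    intro u w hadj hne
    have hmem : s(u, w) = e1 ∨ s(u, w) = e2 := by
      by_contra hcon
      push_neg at hcon
      have hadj2 : G2.Adj u w := by
        rw [hG2, SimpleGraph.deleteEdges_adj]
        refine ⟨hadj, ?_⟩
        simp only [Set.mem_insert_iff, Set.mem_singleton_iff]
        push_neg
        exact hcon
      apply hne
      have hiff : G2.Reachable u0 u ↔ G2.Reachable u0 w :=
        ⟨fun h => h.trans hadj2.reachable, fun h => h.trans hadj2.symm.reachable⟩
      by_cases hr : G2.Reachable u0 u
      · simp only [hφdef, if_pos hr, if_pos (hiff.1 hr)]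
      · have hrw : ¬ G2.Reachable u0 w := fun hw => hr (hiff.2 hw)
        simp only [hφdef, if_neg hr, if_neg hrw]
    rcases hmem with h | h <;> rw [h]
    · exact connected_deleteEdges_of_mem_cycle hGc cyc hcyc he1
    · exact connected_deleteEdges_of_mem_cycle hGc cyc hcyc he2
  have hu0w0 : u0 ≠ w0 := by
    intro h
    rw [h, hφw0] at hφu0
    exact Bool.false_ne_true hφu0
  refine ⟨![u0, w0], ?_, fun t => gdyn G pn Alg φ (gsim G pn Alg φ ![u0, w0] t),
    fun t => gdyn_le G pn Alg φ _, fun t => gdyn_connected G pn Alg φ hGc hcross _, ?_⟩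
  · intro a b hab
    fin_cases a <;> fin_cases b <;> simp_all
  · intro pos st blk hE t
    have hd := exec_eq_gsim G pn Alg φ ![u0, w0] pos st blk hE
    have hinv : ∀ t, φ ((gsim G pn Alg φ ![u0, w0] t).1 0) ≠
        φ ((gsim G pn Alg φ ![u0, w0] t).1 1) := by
      intro t
      induction t with
      | zero =>
        show φ (![u0, w0] 0) ≠ φ (![u0, w0] 1)
        simp [hφu0, hφw0]
      | succ t ih => exact gstep_inv G pn Alg φ ih
    intro heqpos
    apply hinv t
    rw [← (hd t 0).1, ← (hd t 1).1, heqpos]
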